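/- Let L be a real symmetric positive semidefinite n×n matrix with largest eigenvalue λ₁, and let (ψ_j)_{j=0,...,J} be functions ψ_j : [0,λ₁] → [0,1] with ∑_{j=0}^J ψ_j(λ) = 1 for all λ ∈ [0,λ₁]. Then the collection of vectors {√ψ_j(L) δ_i : j = 0,...,J, i = 1,...,n} (where δ_i is the i-th standard basis vector and √ψ_j(L) is defined by functional calculus) forms a tight frame with bound 1: for every f ∈ ℝⁿ, ∑_{j=0}^J ∑_{i=1}^n ⟨f, √ψ_j(L) δ_i⟩² = ‖f‖². -/

import Mathlib

open scoped BigOperators Matrix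

/-- Functional calculus for a real symmetric matrix: `ρ(L) = ∑ ℓ ρ(λ_ℓ) χ_ℓ χ_ℓᵀ`. -/
noncomputable def matrixFunCalc {n : ℕ} {L : Matrix (Fin n) (Fin n) ℝ}
    (hL : L.IsHermitian) (ρ : ℝ → ℝ) : Matrix (Fin n) (Fin n) ℝ :=
  ∑ ℓ : Fin n, ρ (hL.eigenvalues ℓ) •
    Matrix.of (fun i j : Fin n => hL.eigenvectorBasis ℓ i * hL.eigenvectorBasis ℓ j)

lemma aux_sum_sq {m n : ℕ} (r : Fin m → Fin n → ℝ)
    (h : ∀ ℓ ℓ', ∑ i, r ℓ i * r ℓ' i = if ℓ = ℓ' then 1 else 0)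
    (a : Fin m → ℝ) : ∑ i, (∑ ℓ, a ℓ * r ℓ i) ^ 2 = ∑ ℓ, (a ℓ) ^ 2 := by
  have : ∀ i : Fin n, (∑ ℓ, a ℓ * r ℓ i) ^ 2
      = ∑ ℓ, ∑ ℓ', (a ℓ * a ℓ') * (r ℓ i * r ℓ' i) := by
    intro i
    rw [sq, Finset.sum_mul_sum]
    apply Finset.sum_congr rfl; intro ℓ _
    apply Finset.sum_congr rfl; intro ℓ' _
    ring
  simp_rw [this]
  rw [Finset.sum_comm]
  have : ∀ ℓ : Fin m, ∑ i, ∑ ℓ', (a ℓ * a ℓ') * (r ℓ i * r ℓ' i)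
      = ∑ ℓ', (a ℓ * a ℓ') * ∑ i, r ℓ i * r ℓ' i := by
    intro ℓ
    rw [Finset.sum_comm]
    simp [Finset.mul_sum]
  simp_rw [this, h]
  simp [sq]

/-- the SGWT family `{√ψ_j(L) δ_i}` built from a partition of unity on
`[0, λ₁]` is a tight frame with bound 1. -/
theorem sgwt_tight_frame {n : ℕ} (L : Matrix (Fin n) (Fin n) ℝ)
    (hL : L.IsHermitian) (hPSD : L.PosSemidef) (lam1 : ℝ)
    (hmax : ∀ ℓ : Fin n, hL.eigenvalues ℓ ≤ lam1)
    (hattained : ∃ ℓ : Fin n, hL.eigenvalues ℓ = lam1)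
    (J : ℕ) (ψ : Fin (J + 1) → ℝ → ℝ)
    (hrange : ∀ j, ∀ x ∈ Set.Icc (0 : ℝ) lam1, ψ j x ∈ Set.Icc (0 : ℝ) 1)
    (hsum : ∀ x ∈ Set.Icc (0 : ℝ) lam1, ∑ j : Fin (J + 1), ψ j x = 1) :
    ∀ f : Fin n → ℝ,
      ∑ j : Fin (J + 1), ∑ i : Fin n,
        (f ⬝ᵥ (matrixFunCalc hL (fun x => Real.sqrt (ψ j x))).mulVec (Pi.single i 1)) ^ 2
      = f ⬝ᵥ f := by
  intro f
  set χ : Fin n → Fin n → ℝ := fun ℓ i => hL.eigenvectorBasis ℓ i with hχ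
  set μ : Fin n → ℝ := hL.eigenvalues with hμ
  have hev : ∀ ℓ, μ ℓ ∈ Set.Icc (0 : ℝ) lam1 := fun ℓ =>
    ⟨hPSD.eigenvalues_nonneg ℓ, hmax ℓ⟩
  -- orthonormality from the unitary property
  have hmem := (hL.eigenvectorUnitary).2
  rw [Unitary.mem_iff] at hmem
  have hcol : ∀ ℓ ℓ', ∑ i, χ ℓ i * χ ℓ' i = if ℓ = ℓ' then 1 else 0 := by
    intro ℓ ℓ'
    have := congrFun (congrFun hmem.1 ℓ) ℓ'
    simpa [Matrix.mul_apply, Matrix.one_apply, mul_comm, eq_comm] using this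
  have hrow : ∀ i i', ∑ ℓ, χ ℓ i * χ ℓ i' = if i = i' then 1 else 0 := by
    intro i i'
    have := congrFun (congrFun hmem.2 i) i'
    simpa [Matrix.mul_apply, Matrix.one_apply] using this
  set c : Fin n → ℝ := fun ℓ => ∑ k, f k * χ ℓ k with hc
  have key : ∀ ρ : ℝ → ℝ, ∀ i : Fin n,
      f ⬝ᵥ (matrixFunCalc hL ρ).mulVec (Pi.single i 1)
        = ∑ ℓ, (ρ (μ ℓ) * c ℓ) * χ ℓ i := by
    intro ρ i
    simp only [matrixFunCalc, Matrix.mulVec_single_one, Matrix.col_apply, dotProduct, Matrix.sum_apply,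
      Matrix.smul_apply, Matrix.of_apply, smul_eq_mul, mul_one, Finset.mul_sum, hc]
    rw [Finset.sum_comm]
    apply Finset.sum_congr rfl; intro ℓ _
    rw [Finset.sum_mul]
    apply Finset.sum_congr rfl; intro k _
    ring
  calc ∑ j : Fin (J + 1), ∑ i : Fin n,
        (f ⬝ᵥ (matrixFunCalc hL (fun x => Real.sqrt (ψ j x))).mulVec (Pi.single i 1)) ^ 2
      = ∑ j : Fin (J + 1), ∑ ℓ, (Real.sqrt (ψ j (μ ℓ)) * c ℓ) ^ 2 := by
        apply Finset.sum_congr rfl; intro j _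
        simp_rw [key (fun x => Real.sqrt (ψ j x))]
        exact aux_sum_sq χ hcol _
    _ = ∑ ℓ, (∑ j : Fin (J + 1), ψ j (μ ℓ)) * c ℓ ^ 2 := by
        rw [Finset.sum_comm]
        apply Finset.sum_congr rfl; intro ℓ _
        rw [Finset.sum_mul]
        apply Finset.sum_congr rfl; intro j _
        rw [mul_pow, Real.sq_sqrt (hrange j _ (hev ℓ)).1]
    _ = ∑ ℓ, c ℓ ^ 2 := by
        apply Finset.sum_congr rfl; intro ℓ _
        rw [hsum _ (hev ℓ), one_mul]
    _ = f ⬝ᵥ f := by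
        simp only [hc]
        have : ∀ ℓ : Fin n, (∑ k, f k * χ ℓ k) ^ 2
            = ∑ k, ∑ k', (f k * f k') * (χ ℓ k * χ ℓ k') := by
          intro ℓ
          rw [sq, Finset.sum_mul_sum]
          apply Finset.sum_congr rfl; intro k _
          apply Finset.sum_congr rfl; intro k' _
          ring
        simp_rw [this]
        rw [Finset.sum_comm]
        have : ∀ k : Fin n, ∑ ℓ, ∑ k', (f k * f k') * (χ ℓ k * χ ℓ k')
            = ∑ k', (f k * f k') * ∑ ℓ, χ ℓ k * χ ℓ k' := by
          intro k
          rw [Finset.sum_comm]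
          simp [Finset.mul_sum]
        simp_rw [this, hrow]
        simp [dotProduct, mul_comm]
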